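/- arXiv:2007.07671 — 9 statements merged into one kernel-verified Lean document; each statement's English description precedes it below -/
import Mathlib

section
/- Let V be a real vector space and S : V × V → ℝ a symmetric bilinear form. Let s ∈ ℕ, let a : Fin s → Fin s → ℝ and b : Fin s → ℝ be Runge–Kutta coefficients satisfying the symplecticity condition b i * a i j + b j * a j i = b i * b j for all i, j. Let τ ∈ ℝ, let y₀ ∈ V, and let Y, K : Fin s → V satisfy the stage relations Y i = y₀ + τ • Σ_j a i j • K j for all i, together with the stage orthogonality S (K i) (Y i) = 0 for all i. Set y₁ = y₀ + τ • Σ_i b i • K i. Then S y₁ y₁ = S y₀ y₀. -/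
open Finset

/-- Algebraic core of quadratic-invariant preservation by symplectic Runge–Kutta methods:
if the RK coefficients satisfy `b i * a i j + b j * a j i = b i * b j`, the stages satisfy
the stage relations and the stage orthogonality `S (K i) (Y i) = 0`, then the update
preserves the quadratic form `S y y`. -/
theorem symplectic_RK_quadratic_invariant
    {V : Type*} [AddCommGroup V] [Module ℝ V]
    (S : V →ₗ[ℝ] V →ₗ[ℝ] ℝ) (hS : ∀ v w : V, S v w = S w v)
    (s : ℕ) (a : Fin s → Fin s → ℝ) (b : Fin s → ℝ)
    (hsymp : ∀ i j, b i * a i j + b j * a j i = b i * b j)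
    (τ : ℝ) (y₀ : V) (Y K : Fin s → V)
    (hY : ∀ i, Y i = y₀ + τ • ∑ j, a i j • K j)
    (horth : ∀ i, S (K i) (Y i) = 0)
    (y₁ : V) (hy₁ : y₁ = y₀ + τ • ∑ i, b i • K i) :
    S y₁ y₁ = S y₀ y₀ := by
  subst hy₁
  have hK : ∀ i, S (K i) y₀ = -(∑ j, τ * (a i j * S (K i) (K j))) := by
    intro i
    have h := horth i
    rw [hY i] at h
    simp only [map_add, map_smul, map_sum, smul_eq_mul, Finset.mul_sum] at h
    linarith
  have hdouble : ∑ i, ∑ j, b i * a i j * S (K i) (K j)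
      = ∑ i, ∑ j, b j * a j i * S (K i) (K j) := by
    rw [Finset.sum_comm]
    exact Finset.sum_congr rfl fun i _ =>
      Finset.sum_congr rfl fun j _ => by rw [hS (K j) (K i)]
  have hAB : 2 * (∑ i, ∑ j, b i * a i j * S (K i) (K j))
      = ∑ i, ∑ j, b i * b j * S (K i) (K j) := by
    rw [two_mul]
    nth_rewrite 2 [hdouble]
    rw [← Finset.sum_add_distrib]
    refine Finset.sum_congr rfl fun i _ => ?_
    rw [← Finset.sum_add_distrib]
    exact Finset.sum_congr rfl fun j _ => by rw [← add_mul, hsymp i j]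
  simp only [map_add, map_smul, map_sum, smul_eq_mul, LinearMap.add_apply,
    LinearMap.smul_apply, LinearMap.sum_apply, Finset.sum_apply]
  have t1 : ∑ x, b x * S (K x) y₀ = ∑ x, ∑ j, (-τ) * (b x * a x j * S (K x) (K j)) := by
    refine Finset.sum_congr rfl fun x _ => ?_
    rw [hK x, mul_neg, Finset.mul_sum, ← Finset.sum_neg_distrib]
    exact Finset.sum_congr rfl fun j _ => by ring
  have t2 : ∑ x, b x * (S y₀ (K x) + τ * ∑ j, b j * S (K j) (K x))
      = ∑ x, ∑ j, ((-τ) * (b x * a x j * S (K x) (K j))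
          + τ * (b x * b j * S (K x) (K j))) := by
    refine Finset.sum_congr rfl fun x _ => ?_
    rw [hS y₀ (K x), hK x, mul_add]
    rw [Finset.sum_add_distrib]
    congr 1
    · rw [mul_neg, Finset.mul_sum, ← Finset.sum_neg_distrib]
      exact Finset.sum_congr rfl fun j _ => by ring
    · rw [Finset.mul_sum, Finset.mul_sum]
      refine Finset.sum_congr rfl fun j _ => ?_
      rw [hS (K j) (K x)]; ring
  rw [t1, t2]
  simp only [Finset.sum_add_distrib, ← Finset.mul_sum]
  linear_combination (-(τ * τ)) * hAB
end

section
/- Let V be a real inner product space, S : V × V → ℝ a symmetric bilinear form, and f : ℝ × V → V a map such that S (f t y) y = 0 for all t ∈ ℝ and y ∈ V. Let a : Fin s → Fin s → ℝ, b : Fin s → ℝ be Runge–Kutta coefficients satisfying b i * a i j + b j * a j i = b i * b j for all i, j, and set c i = Σ_j a i j. Let τ, t₀ ∈ ℝ, let y₀ ∈ V, and suppose the stage values Y : Fin s → V satisfy Y i = y₀ + τ • Σ_j a i j • f (t₀ + c j * τ) (Y j) for all i. Define y₁ = y₀ + τ • Σ_i b i • f (t₀ + c i * τ) (Y i). Then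 S y₁ y₁ = S y₀ y₀, i.e. the Runge–Kutta step preserves the quadratic quantity S y y of the (possibly nonautonomous) ODE y' = f(t, y). -/
open Finset

/-- Theorem 2.2 of [ELW06]: a symplectic Runge–Kutta method preserves every quadratic
invariant `S y y` of the (possibly nonautonomous) ODE `y' = f (t, y)`. -/
theorem symplectic_RK_preserves_quadratic_invariant_ODE
    {V : Type*} [NormedAddCommGroup V] [InnerProductSpace ℝ V]
    (S : V →ₗ[ℝ] V →ₗ[ℝ] ℝ) (hS : ∀ v w : V, S v w = S w v)
    (f : ℝ × V → V) (hf : ∀ (t : ℝ) (y : V), S (f (t, y)) y = 0)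
    (s : ℕ) (a : Fin s → Fin s → ℝ) (b : Fin s → ℝ)
    (hsymp : ∀ i j, b i * a i j + b j * a j i = b i * b j)
    (c : Fin s → ℝ) (hc : ∀ i, c i = ∑ j, a i j)
    (τ t₀ : ℝ) (y₀ : V) (Y : Fin s → V)
    (hY : ∀ i, Y i = y₀ + τ • ∑ j, a i j • f (t₀ + c j * τ, Y j))
    (y₁ : V) (hy₁ : y₁ = y₀ + τ • ∑ i, b i • f (t₀ + c i * τ, Y i)) :
    S y₁ y₁ = S y₀ y₀ := by
  set g : Fin s → V := fun i => f (t₀ + c i * τ, Y i) with hg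
  set G : Fin s → Fin s → ℝ := fun i j => S (g i) (g j) with hG
  have hGsymm : ∀ i j, G i j = G j i := fun i j => hS _ _
  -- key: S (g i) y₀ = -(τ * ∑ j, a i j * G i j)
  have hkey : ∀ i, S (g i) y₀ = -(τ * ∑ j, a i j * G i j) := by
    intro i
    have h : S (g i) (Y i) = 0 := hf _ _
    rw [hY i] at h
    simp only [map_add, map_smul, map_sum, smul_eq_mul] at h
    linarith
  -- double-sum symmetrization
  have hdouble : ∑ i, ∑ j, b i * b j * G i j = 2 * ∑ i, ∑ j, b i * a i j * G i j := by
    have h1 : ∑ i, ∑ j, b i * b j * G i j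
        = (∑ i, ∑ j, b i * a i j * G i j) + ∑ i, ∑ j, b j * a j i * G i j := by
      rw [← Finset.sum_add_distrib]
      refine Finset.sum_congr rfl fun i _ => ?_
      rw [← Finset.sum_add_distrib]
      refine Finset.sum_congr rfl fun j _ => ?_
      rw [← hsymp i j]; ring
    have h2 : ∑ i, ∑ j, b j * a j i * G i j = ∑ i, ∑ j, b i * a i j * G i j := by
      rw [Finset.sum_comm]
      exact Finset.sum_congr rfl fun i _ => Finset.sum_congr rfl fun j _ => by
        rw [hGsymm i j]
    rw [h1, h2]; ring
  set u : V := τ • ∑ i, b i • g i with hu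
  have h1 : S y₀ u = τ * ∑ i, b i * S (g i) y₀ := by
    simp only [hu, map_smul, map_sum, smul_eq_mul]
    congr 1
    exact Finset.sum_congr rfl fun i _ => by rw [hS y₀ (g i)]
  have h2 : S u y₀ = τ * ∑ i, b i * S (g i) y₀ := by
    simp only [hu, map_smul, map_sum, LinearMap.smul_apply, LinearMap.sum_apply,
      smul_eq_mul]
  have hG' : ∀ i j, S (g i) (g j) = G i j := fun _ _ => rfl
  have h3 : S u u = τ * (τ * ∑ i, ∑ j, b i * b j * G i j) := by
    simp only [hu, map_smul, map_sum, LinearMap.smul_apply, LinearMap.sum_apply,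
      smul_eq_mul, hG']
    congr 1
    rw [Finset.mul_sum]
    refine Finset.sum_congr rfl fun i _ => ?_
    simp only [Finset.mul_sum]
    exact Finset.sum_congr rfl fun j _ => by rw [hGsymm j i]; ring
  have hsum : ∑ i, b i * S (g i) y₀ = -(τ * ∑ i, ∑ j, b i * a i j * G i j) := by
    rw [Finset.mul_sum, ← Finset.sum_neg_distrib]
    refine Finset.sum_congr rfl fun i _ => ?_
    rw [hkey i]
    simp only [mul_neg]
    congr 1
    simp only [Finset.mul_sum]
    exact Finset.sum_congr rfl fun j _ => by ring
  have hy₁' : y₁ = y₀ + u := hy₁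
  simp only [hy₁', map_add, LinearMap.add_apply]
  rw [h1, h2, h3, hsum, hdouble]
  ring
end

section
/- (Theorem 3.1, mass part.) Let N ∈ ℕ, let L : ℂ^N → ℂ^N be a Hermitian (self-adjoint) linear map, β ∈ ℝ, C₀ > 0, ρ(ψ) = √(Σ_j |ψ_j|⁴ + C₀), τ > 0. Let a : Fin s → Fin s → ℝ, b : Fin s → ℝ be Runge–Kutta coefficients satisfying the symplecticity condition b i * a i j + b j * a j i = b i * b j for all i, j, and set c i = Σ_j a i j. Given ψⁿ ∈ ℂ^N and qⁿ ∈ ℝ, suppose the stage values Ψ : Fin s → ℂ^N and Q : Fin s → ℝ satisfy Ψ i = exp(−i c i τ L) ψⁿ + τ Σ_j a i j • (exp(i (c j − c i) τ L) (k j)) and Q i = qⁿ + τ Σ_j a i j * l j, where k i = −i (β Q i / ρ(Ψ i)) • (|Ψ i|²Ψ i) and l i = (2 / ρ(Ψ i)) * Re⟨−i (L (Ψ i)), |Ψ i|²(Ψ i)⟩. Define ψⁿ⁺¹ = exp(−i τ L) ψⁿ + τ Σ_i b i • (exp(−i (1 − c i) τ L) (k i)). Then ⟨ψⁿ⁺¹,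 ψⁿ⁺¹⟩ = ⟨ψⁿ, ψⁿ⟩, i.e. the exponential SAV Runge–Kutta step preserves the discrete mass Mⁿ = ⟨ψⁿ, ψⁿ⟩. -/
open Finset Complex

/-- The componentwise cubic nonlinearity `|ψ|²ψ`. -/
noncomputable def nlVec {N : ℕ} (ψ : EuclideanSpace ℂ (Fin N)) : EuclideanSpace ℂ (Fin N) :=
  WithLp.toLp 2 (fun j => (‖ψ j‖ : ℂ) ^ 2 * ψ j)

/-- The inner ℂ product `⟨x, y⟩ = ∑ j, x j * conj (y j)` of the paper. -/
noncomputable def pInner {N : ℕ} (x y : EuclideanSpace ℂ (Fin N)) : ℂ :=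
  ∑ j, x j * (starRingEnd ℂ) (y j)

/-- The SAV denominator `ρ(ψ) = √(∑ j |ψ j|⁴ + C₀)`. -/
noncomputable def savRho {N : ℕ} (C₀ : ℝ) (ψ : EuclideanSpace ℂ (Fin N)) : ℝ :=
  Real.sqrt ((∑ j, ‖ψ j‖ ^ 4) + C₀)

lemma pInner_eq_inner {N : ℕ} (x y : EuclideanSpace ℂ (Fin N)) :
    pInner x y = (inner ℂ y x : ℂ) := by
  rw [pInner, PiLp.inner_apply]
  exact Finset.sum_congr rfl fun j _ => by simp [RCLike.inner_apply, mul_comm]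

lemma nl_scalar_left (z : ℂ) :
    (starRingEnd ℂ) ((‖z‖:ℂ)^2 * z) * z = ((‖z‖^4 : ℝ) : ℂ) := by
  rw [map_mul, mul_assoc, Complex.conj_mul', ← Complex.ofReal_pow, Complex.conj_ofReal]
  push_cast
  ring

lemma nl_scalar_right (z : ℂ) :
    (starRingEnd ℂ) z * ((‖z‖:ℂ)^2 * z) = ((‖z‖^4 : ℝ) : ℂ) := by
  rw [← mul_assoc, mul_comm ((starRingEnd ℂ) z), mul_assoc, Complex.conj_mul']
  push_cast
  ring

lemma inner_nl_left {N : ℕ} (x : EuclideanSpace ℂ (Fin N)) :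
    (inner ℂ (nlVec x) x : ℂ) = ((∑ j, ‖x j‖^4 : ℝ) : ℂ) := by
  rw [PiLp.inner_apply]
  push_cast
  exact Finset.sum_congr rfl fun j _ => by
    have h := nl_scalar_left (x j)
    simp [RCLike.inner_apply, nlVec] at h ⊢
    linear_combination h

lemma inner_nl_right {N : ℕ} (x : EuclideanSpace ℂ (Fin N)) :
    (inner ℂ x (nlVec x) : ℂ) = ((∑ j, ‖x j‖^4 : ℝ) : ℂ) := by
  rw [PiLp.inner_apply]
  push_cast
  exact Finset.sum_congr rfl fun j _ => by
    have h := nl_scalar_right (x j)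
    simp [RCLike.inner_apply, nlVec] at h ⊢
    linear_combination h

set_option maxHeartbeats 2000000 in
/-- Theorem 3.1 (mass part): a symplectic ESAV-RK step preserves the discrete mass
`Mⁿ = ⟨ψⁿ, ψⁿ⟩`. -/
theorem ESAV_RK_mass_conservation {N : ℕ}
    (L : EuclideanSpace ℂ (Fin N) →L[ℂ] EuclideanSpace ℂ (Fin N))
    (hL : ∀ x y, pInner (L x) y = pInner x (L y))
    (β : ℝ) (C₀ : ℝ) (hC₀ : 0 < C₀) (τ : ℝ) (hτ : 0 < τ)
    (s : ℕ) (a : Fin s → Fin s → ℝ) (b : Fin s → ℝ)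
    (hsymp : ∀ i j, b i * a i j + b j * a j i = b i * b j)
    (c : Fin s → ℝ) (hc : ∀ i, c i = ∑ j, a i j)
    (ψn : EuclideanSpace ℂ (Fin N)) (qn : ℝ)
    (Ψ : Fin s → EuclideanSpace ℂ (Fin N)) (Q : Fin s → ℝ)
    (k : Fin s → EuclideanSpace ℂ (Fin N)) (l : Fin s → ℝ)
    (hk : ∀ i, k i = (-Complex.I * ((β * Q i / savRho C₀ (Ψ i) : ℝ) : ℂ)) • nlVec (Ψ i))
    (hl : ∀ i, l i = (2 / savRho C₀ (Ψ i)) *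
        (pInner ((-Complex.I) • L (Ψ i)) (nlVec (Ψ i))).re)
    (hΨ : ∀ i, Ψ i = NormedSpace.exp (((-Complex.I) * ((c i * τ : ℝ) : ℂ)) • L) ψn
        + τ • ∑ j, a i j •
            NormedSpace.exp ((Complex.I * (((c j - c i) * τ : ℝ) : ℂ)) • L) (k j))
    (hQ : ∀ i, Q i = qn + τ * ∑ j, a i j * l j)
    (ψn1 : EuclideanSpace ℂ (Fin N))
    (hψn1 : ψn1 = NormedSpace.exp (((-Complex.I) * ((τ : ℝ) : ℂ)) • L) ψn
        + τ • ∑ i, b i •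
            NormedSpace.exp (((-Complex.I) * (((1 - c i) * τ : ℝ) : ℂ)) • L) (k i)) :
    pInner ψn1 ψn1 = pInner ψn ψn := by
  classical
  clear hl hQ hc hC₀
  -- self-adjointness of L
  have hLsa : IsSelfAdjoint L := by
    rw [ContinuousLinearMap.isSelfAdjoint_iff_isSymmetric]
    intro x y
    have h := hL y x
    rw [pInner_eq_inner, pInner_eq_inner] at h
    exact h.symm
  set e : ℂ → (EuclideanSpace ℂ (Fin N) →L[ℂ] EuclideanSpace ℂ (Fin N)) :=
    fun z => NormedSpace.exp (z • L) with he
  have e_mul : ∀ z w (x : EuclideanSpace ℂ (Fin N)), e z (e w x) = e (z + w) x := by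
    intro z w x
    have hcom : Commute (z • L) (w • L) := by
      unfold Commute SemiconjBy
      simp [smul_mul_assoc, mul_smul_comm, smul_smul, mul_comm]
    simp only [he]
    let +nondep : NormedAlgebra ℚ (EuclideanSpace ℂ (Fin N) →L[ℂ] EuclideanSpace ℂ (Fin N)) :=
      .restrictScalars ℚ ℂ _
    rw [add_smul z w L, NormedSpace.exp_add_of_commute hcom]
    rfl
  have e_zero : ∀ x : EuclideanSpace ℂ (Fin N), e 0 x = x := by
    intro x
    simp only [he]
    rw [show (0:ℂ) • L = 0 from zero_smul ℂ L, NormedSpace.exp_zero]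
    rfl
  have e_star : ∀ z, star (e z) = e ((starRingEnd ℂ) z) := by
    intro z
    simp only [he]
    rw [NormedSpace.star_exp, star_smul, hLsa.star_eq]
    rfl
  have e_unit : ∀ z, (starRingEnd ℂ) z = -z →
      ∀ x y : EuclideanSpace ℂ (Fin N), (inner ℂ (e z x) (e z y) : ℂ) = inner ℂ x y := by
    intro z hz x y
    have h1 : ContinuousLinearMap.adjoint (e (-z)) = e z := by
      rw [← ContinuousLinearMap.star_eq_adjoint, e_star, map_neg, hz, neg_neg]
    calc (inner ℂ (e z x) (e z y) : ℂ)
        = inner ℂ ((ContinuousLinearMap.adjoint (e (-z))) x) (e z y) := by rw [h1]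
      _ = inner ℂ x ((e (-z)) (e z y)) := ContinuousLinearMap.adjoint_inner_left _ _ _
      _ = inner ℂ x y := by rw [e_mul, neg_add_cancel, e_zero]
  set K : Fin s → EuclideanSpace ℂ (Fin N) :=
    fun i => e (Complex.I * ((c i * τ : ℝ) : ℂ)) (k i) with hKdef
  -- rewrite ψn1
  have hψn1' : ψn1 = e (-Complex.I * ((τ : ℝ) : ℂ)) (ψn + τ • ∑ i, b i • K i) := by
    rw [hψn1, map_add, ContinuousLinearMap.map_smul_of_tower, map_sum]
    congr 2
    refine Finset.sum_congr rfl fun i _ => ?_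
    rw [ContinuousLinearMap.map_smul_of_tower]
    congr 1
    simp only [hKdef]
    rw [e_mul]
    congr 1
    push_cast
    ring_nf
    rfl
  -- the propagated stage equation
  have hΦ : ∀ i, e (Complex.I * ((c i * τ : ℝ) : ℂ)) (Ψ i)
      = ψn + τ • ∑ j, a i j • K j := by
    intro i
    rw [hΨ i, map_add]
    congr 1
    · rw [e_mul]
      have h0 : Complex.I * ((c i * τ : ℝ) : ℂ) + -Complex.I * ((c i * τ : ℝ) : ℂ) = 0 := by
        ring
      rw [h0, e_zero]
    · rw [ContinuousLinearMap.map_smul_of_tower, map_sum]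
      congr 1
      refine Finset.sum_congr rfl fun j _ => ?_
      rw [ContinuousLinearMap.map_smul_of_tower]
      congr 1
      simp only [hKdef]
      rw [e_mul]
      congr 1
      push_cast
      ring
  -- stage-level skew identity
  have hnl : ∀ i, (inner ℂ (k i) (Ψ i) : ℂ) + inner ℂ (Ψ i) (k i) = 0 := by
    intro i
    rw [hk i, inner_smul_left, inner_smul_right, inner_nl_left, inner_nl_right]
    simp only [map_mul, map_neg, Complex.conj_I, Complex.conj_ofReal]
    ring
  have hzi : ∀ i : Fin s,
      (starRingEnd ℂ) (Complex.I * ((c i * τ : ℝ) : ℂ)) = -(Complex.I * ((c i * τ : ℝ) : ℂ)) := by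
    intro i
    simp [map_mul, Complex.conj_ofReal]
  have hKΦ : ∀ i, (inner ℂ (K i) (ψn + τ • ∑ j, a i j • K j) : ℂ)
      + inner ℂ (ψn + τ • ∑ j, a i j • K j) (K i) = 0 := by
    intro i
    rw [← hΦ i]
    simp only [hKdef]
    rw [e_unit _ (hzi i), e_unit _ (hzi i)]
    exact hnl i
  -- expansion helpers
  have hsum_left : ∀ (w : Fin s → ℝ) (v : EuclideanSpace ℂ (Fin N)),
      (inner ℂ (τ • ∑ i, w i • K i) v : ℂ) = (τ:ℂ) * ∑ i, (w i : ℂ) * inner ℂ (K i) v := by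
    intro w v
    rw [← Complex.coe_smul, inner_smul_left, Complex.conj_ofReal, sum_inner]
    congr 1
    refine Finset.sum_congr rfl fun i _ => ?_
    rw [← Complex.coe_smul, inner_smul_left, Complex.conj_ofReal]
  have hsum_right : ∀ (w : Fin s → ℝ) (v : EuclideanSpace ℂ (Fin N)),
      (inner ℂ v (τ • ∑ i, w i • K i) : ℂ) = (τ:ℂ) * ∑ i, (w i : ℂ) * inner ℂ v (K i) := by
    intro w v
    rw [← Complex.coe_smul, inner_smul_right, inner_sum]
    congr 1
    refine Finset.sum_congr rfl fun i _ => ?_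
    rw [← Complex.coe_smul, inner_smul_right]
  -- per-stage expanded identity
  have hstage : ∀ i, (inner ℂ (K i) ψn : ℂ) + inner ℂ ψn (K i)
      + (τ:ℂ) * ∑ j, (a i j : ℂ) * ((inner ℂ (K i) (K j) : ℂ) + inner ℂ (K j) (K i)) = 0 := by
    intro i
    have h := hKΦ i
    rw [inner_add_right, inner_add_left, hsum_right (a i) (K i), hsum_left (a i) (K i)] at h
    have hsplit : ∑ j, (a i j : ℂ) * ((inner ℂ (K i) (K j) : ℂ) + inner ℂ (K j) (K i))
        = (∑ j, (a i j : ℂ) * (inner ℂ (K i) (K j) : ℂ))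
          + ∑ j, (a i j : ℂ) * (inner ℂ (K j) (K i) : ℂ) := by
      rw [← Finset.sum_add_distrib]
      exact Finset.sum_congr rfl fun j _ => by ring
    rw [hsplit]
    linear_combination h
  -- main computation
  rw [pInner_eq_inner, pInner_eq_inner, hψn1',
    e_unit _ (by simp [map_mul, Complex.conj_ofReal] :
      (starRingEnd ℂ) (-Complex.I * ((τ:ℝ):ℂ)) = -(-Complex.I * ((τ:ℝ):ℂ)))]
  rw [inner_add_left, inner_add_right, inner_add_right,
    hsum_left b ψn, hsum_right b ψn]
  have hww : (inner ℂ (τ • ∑ i, b i • K i) (τ • ∑ i, b i • K i) : ℂ)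
      = (τ:ℂ) * ∑ i, (b i : ℂ) * ((τ:ℂ) * ∑ j, (b j : ℂ) * (inner ℂ (K i) (K j) : ℂ)) := by
    rw [hsum_left b]
    congr 1
    exact Finset.sum_congr rfl fun i _ => by rw [hsum_right b (K i)]
  rw [hww]
  -- use symplecticity on the double sum
  have hbb : ∀ i j, ((b i : ℂ) * (b j : ℂ)) = (b i : ℂ) * (a i j : ℂ) + (b j : ℂ) * (a j i : ℂ) := by
    intro i j
    exact_mod_cast congrArg (fun r : ℝ => (r : ℂ)) (hsymp i j).symm
  have hswap : ∑ i, ∑ j, (b j:ℂ)*(a j i:ℂ)*(inner ℂ (K i) (K j) : ℂ)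
      = ∑ i, ∑ j, (b i:ℂ)*(a i j:ℂ)*(inner ℂ (K j) (K i) : ℂ) := Finset.sum_comm
  have hdouble : ∑ i, (b i : ℂ) * ((τ:ℂ) * ∑ j, (b j : ℂ) * (inner ℂ (K i) (K j) : ℂ))
      = (τ:ℂ) * ∑ i, (b i : ℂ)
          * ∑ j, (a i j : ℂ) * ((inner ℂ (K i) (K j) : ℂ) + inner ℂ (K j) (K i)) := by
    have step1 : ∑ i, (b i : ℂ) * ((τ:ℂ) * ∑ j, (b j : ℂ) * (inner ℂ (K i) (K j) : ℂ))
        = (τ:ℂ) * ∑ i, ∑ j,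
            ((b i : ℂ) * (a i j : ℂ) * (inner ℂ (K i) (K j) : ℂ)
              + (b j : ℂ) * (a j i : ℂ) * (inner ℂ (K i) (K j) : ℂ)) := by
      rw [Finset.mul_sum]
      refine Finset.sum_congr rfl fun i _ => ?_
      rw [show (b i : ℂ) * ((τ:ℂ) * ∑ j, (b j : ℂ) * (inner ℂ (K i) (K j) : ℂ))
          = (τ:ℂ) * ((b i : ℂ) * ∑ j, (b j : ℂ) * (inner ℂ (K i) (K j) : ℂ)) from by ring,
        Finset.mul_sum]
      congr 1
      refine Finset.sum_congr rfl fun j _ => ?_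
      rw [← mul_assoc, hbb i j]
      ring
    rw [step1]
    congr 1
    simp only [Finset.sum_add_distrib]
    rw [hswap, ← Finset.sum_add_distrib]
    refine Finset.sum_congr rfl fun i _ => ?_
    rw [← Finset.sum_add_distrib, Finset.mul_sum]
    refine Finset.sum_congr rfl fun j _ => ?_
    ring
  rw [hdouble]
  have hfin : (τ:ℂ) * ∑ i, (b i : ℂ)
        * ∑ j, (a i j : ℂ) * ((inner ℂ (K i) (K j) : ℂ) + inner ℂ (K j) (K i))
      = - ∑ i, (b i : ℂ) * ((inner ℂ (K i) ψn : ℂ) + inner ℂ ψn (K i)) := by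
    rw [Finset.mul_sum, ← Finset.sum_neg_distrib]
    refine Finset.sum_congr rfl fun i _ => ?_
    linear_combination (b i : ℂ) * hstage i
  have hC : ∑ i, (b i : ℂ) * ((inner ℂ (K i) ψn : ℂ) + inner ℂ ψn (K i))
      = (∑ i, (b i : ℂ) * (inner ℂ (K i) ψn : ℂ)) + ∑ i, (b i : ℂ) * (inner ℂ ψn (K i) : ℂ) := by
    rw [← Finset.sum_add_distrib]
    exact Finset.sum_congr rfl fun i _ => by ring
  linear_combination (τ:ℂ) * hfin - (τ:ℂ) * hC
end

section
/- Let N ∈ ℕ, let L : ℂ^N → ℂ^N be a Hermitian (self-adjoint) linear map, β ∈ ℝ, C₀ > 0 and ρ(ψ) = √(Σ_j |ψ_j|⁴ + C₀). Let ψ : ℝ → ℂ^N be differentiable and q : ℝ → ℝ be any function such that for all t, ψ'(t) = −i • (L (ψ t) + (β q t / ρ(ψ t)) • (|ψ t|²(ψ t))). Then the mass t ↦ ⟨ψ t, ψ t⟩ is constant in t. -/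
open Finset Complex

/-- `⟪x, |x|²x⟫ = ∑ |x j|⁴` is real. -/
lemma inner_nlVec {N : ℕ} (x : EuclideanSpace ℂ (Fin N)) :
    (inner ℂ x (nlVec x) : ℂ) = ((∑ j, ‖x j‖ ^ 4 : ℝ) : ℂ) := by
  rw [PiLp.inner_apply]
  push_cast
  refine Finset.sum_congr rfl fun j _ => ?_
  simp only [RCLike.inner_apply, nlVec]
  rw [mul_assoc, Complex.mul_conj']
  norm_cast
  ring

/-- Mass conservation law of the SAV reformulated system (7): along any solution of the
first SAV equation, the mass `⟨ψ(t), ψ(t)⟩` is constant in `t`. -/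
theorem SAV_mass_conservation {N : ℕ}
    (L : EuclideanSpace ℂ (Fin N) →ₗ[ℂ] EuclideanSpace ℂ (Fin N))
    (hL : ∀ x y, pInner (L x) y = pInner x (L y))
    (β : ℝ) (C₀ : ℝ) (hC₀ : 0 < C₀)
    (ψ : ℝ → EuclideanSpace ℂ (Fin N)) (q : ℝ → ℝ)
    (hψ : Differentiable ℝ ψ)
    (hode : ∀ t, deriv ψ t = (-Complex.I) •
        (L (ψ t) + ((β * q t / savRho C₀ (ψ t) : ℝ) : ℂ) • nlVec (ψ t))) :
    ∀ t₁ t₂ : ℝ, pInner (ψ t₁) (ψ t₁) = pInner (ψ t₂) (ψ t₂) := by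
  have key : ∀ t, HasDerivAt (fun s => (inner ℂ (ψ s) (ψ s) : ℂ)) 0 t := by
    intro t
    have h1 := ((hψ t).hasDerivAt.inner ℂ (hψ t).hasDerivAt)
    refine h1.congr_deriv ?_
    set c : ℂ := ((β * q t / savRho C₀ (ψ t) : ℝ) : ℂ) with hc
    set w : ℂ := inner ℂ (ψ t) (L (ψ t)) + c * inner ℂ (ψ t) (nlVec (ψ t)) with hw
    have hwim : w.im = 0 := by
      have h2 : (inner ℂ (ψ t) (L (ψ t)) : ℂ) = inner ℂ (L (ψ t)) (ψ t) := by
        have := hL (ψ t) (ψ t)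
        rw [pInner_eq_inner, pInner_eq_inner] at this
        exact this
      have h3 : (inner ℂ (ψ t) (L (ψ t)) : ℂ).im = 0 :=
        Complex.conj_eq_iff_im.mp (by rw [inner_conj_symm]; exact h2.symm)
      have h4 : (c * inner ℂ (ψ t) (nlVec (ψ t))).im = 0 := by
        rw [inner_nlVec, hc, ← Complex.ofReal_mul]
        exact Complex.ofReal_im _
      simp only [hw, Complex.add_im, h3, h4, add_zero]
    have hD : (inner ℂ (ψ t) (deriv ψ t) : ℂ) = (-Complex.I) * w := by
      rw [hode t, inner_smul_right, inner_add_right, inner_smul_right, hw]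
    have hD' : (inner ℂ (deriv ψ t) (ψ t) : ℂ) = Complex.I * (starRingEnd ℂ) w := by
      rw [← inner_conj_symm, hD]
      simp [map_mul]
    rw [hD, hD']
    have : (starRingEnd ℂ) w = w := Complex.conj_eq_iff_im.mpr hwim
    rw [this]; ring
  have hconst : ∀ t₁ t₂ : ℝ, (inner ℂ (ψ t₁) (ψ t₁) : ℂ) = inner ℂ (ψ t₂) (ψ t₂) := by
    intro t₁ t₂
    exact is_const_of_deriv_eq_zero (fun t => (key t).differentiableAt)
      (fun t => (key t).deriv) t₁ t₂
  intro t₁ t₂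
  rw [pInner_eq_inner, pInner_eq_inner]
  exact hconst t₁ t₂
end

section
/- Let N ∈ ℕ, let L : ℂ^N → ℂ^N be a Hermitian (self-adjoint) linear map, β ∈ ℝ, C₀ > 0 and ρ(ψ) = √(Σ_j |ψ_j|⁴ + C₀). Let ψ : ℝ → ℂ^N and q : ℝ → ℝ be differentiable and satisfy, for all t, ψ'(t) = −i • (L (ψ t) + (β q t / ρ(ψ t)) • (|ψ t|²(ψ t))) and q'(t) = (2 / ρ(ψ t)) * Re⟨ψ'(t), |ψ t|²(ψ t)⟩. Then the modified energy t ↦ Re⟨L (ψ t), ψ t⟩ + (β/2) (q t)² is constant in t. -/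
open Finset Complex

/-- Modified energy conservation law of the SAV reformulated system (7): along any
solution `(ψ, q)`, the modified energy `Re⟨Lψ, ψ⟩ + (β/2) q²` is constant in `t`. -/
theorem SAV_energy_conservation {N : ℕ}
    (L : EuclideanSpace ℂ (Fin N) →ₗ[ℂ] EuclideanSpace ℂ (Fin N))
    (hL : ∀ x y, pInner (L x) y = pInner x (L y))
    (β : ℝ) (C₀ : ℝ) (hC₀ : 0 < C₀)
    (ψ : ℝ → EuclideanSpace ℂ (Fin N)) (q : ℝ → ℝ)
    (hψ : Differentiable ℝ ψ) (hq : Differentiable ℝ q)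
    (hode₁ : ∀ t, deriv ψ t = (-Complex.I) •
        (L (ψ t) + ((β * q t / savRho C₀ (ψ t) : ℝ) : ℂ) • nlVec (ψ t)))
    (hode₂ : ∀ t, deriv q t =
        (2 / savRho C₀ (ψ t)) * (pInner (deriv ψ t) (nlVec (ψ t))).re) :
    ∀ t₁ t₂ : ℝ,
      (pInner (L (ψ t₁)) (ψ t₁)).re + (β / 2) * (q t₁) ^ 2
        = (pInner (L (ψ t₂)) (ψ t₂)).re + (β / 2) * (q t₂) ^ 2 := by
  -- translate the hermitian hypothesis to mathlib inner products
  have hL' : ∀ x y : EuclideanSpace ℂ (Fin N), (inner ℂ y (L x) : ℂ) = inner ℂ (L y) x := by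
    intro x y
    have := hL x y
    rwa [pInner_eq_inner, pInner_eq_inner] at this
  set E : ℝ → ℝ := fun t => (inner ℂ (ψ t) (L (ψ t)) : ℂ).re + (β / 2) * (q t) ^ 2 with hE
  have key : ∀ t, HasDerivAt E 0 t := by
    intro t
    set v := deriv ψ t with hv
    set c : ℂ := ((β * q t / savRho C₀ (ψ t) : ℝ) : ℂ) with hc
    set w : EuclideanSpace ℂ (Fin N) := L (ψ t) + c • nlVec (ψ t) with hw
    have hψ' : HasDerivAt ψ v t := (hψ t).hasDerivAt
    have hLψ : HasDerivAt (fun s => L (ψ s)) (L v) t := by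
      have := ((LinearMap.toContinuousLinearMap L).restrictScalars ℝ).hasFDerivAt.comp_hasDerivAt t hψ'
      exact this
    have hInner : HasDerivAt (fun s => (inner ℂ (ψ s) (L (ψ s)) : ℂ))
        ((inner ℂ (ψ t) (L v) : ℂ) + inner ℂ v (L (ψ t))) t := hψ'.inner ℂ hLψ
    have hRe : HasDerivAt (fun s => (inner ℂ (ψ s) (L (ψ s)) : ℂ).re)
        (((inner ℂ (ψ t) (L v) : ℂ) + inner ℂ v (L (ψ t))).re) t :=
      Complex.reCLM.hasFDerivAt.comp_hasDerivAt t hInner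
    have hq' : HasDerivAt (fun s => (β / 2) * (q s) ^ 2)
        ((β / 2) * (2 * q t ^ 1 * deriv q t)) t :=
      (((hq t).hasDerivAt).pow 2).const_mul (β / 2)
    have hEt : HasDerivAt E
        ((((inner ℂ (ψ t) (L v) : ℂ) + inner ℂ v (L (ψ t))).re)
          + (β / 2) * (2 * q t ^ 1 * deriv q t)) t := hRe.add hq'
    have hzero : (((inner ℂ (ψ t) (L v) : ℂ) + inner ℂ v (L (ψ t))).re)
          + (β / 2) * (2 * q t ^ 1 * deriv q t) = 0 := by
      have h1 : (inner ℂ (ψ t) (L v) : ℂ).re = (inner ℂ v (L (ψ t)) : ℂ).re := by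
        rw [hL' v (ψ t), ← inner_conj_symm]
        exact Complex.conj_re _
      have hqd : (β / 2) * (2 * q t ^ 1 * deriv q t)
          = 2 * ((inner ℂ v (c • nlVec (ψ t)) : ℂ).re) := by
        rw [hode₂ t, pInner_eq_inner, inner_smul_right, ← hv]
        have : (inner ℂ (nlVec (ψ t)) v : ℂ).re = (inner ℂ v (nlVec (ψ t)) : ℂ).re := by
          rw [← inner_conj_symm]; exact Complex.conj_re _
        rw [this, hc]
        rw [Complex.re_ofReal_mul]
        ring
      have hvw : v = (-Complex.I) • w := by rw [hv, hode₁ t, hw, hc]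
      have hinww : (inner ℂ v w : ℂ) = Complex.I * (inner ℂ w w : ℂ) := by
        rw [hvw, inner_smul_left]
        simp [Complex.conj_I]
      have him : (inner ℂ w w : ℂ).im = 0 := by simpa using inner_self_im (𝕜 := ℂ) w
      have : (inner ℂ v w : ℂ).re = 0 := by
        rw [hinww, Complex.mul_re, Complex.I_re, Complex.I_im, him]
        ring
      calc (((inner ℂ (ψ t) (L v) : ℂ) + inner ℂ v (L (ψ t))).re)
            + (β / 2) * (2 * q t ^ 1 * deriv q t)
          = 2 * ((inner ℂ v (L (ψ t)) : ℂ).re) + 2 * ((inner ℂ v (c • nlVec (ψ t)) : ℂ).re) := by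
            rw [hqd, Complex.add_re, h1]; ring
        _ = 2 * ((inner ℂ v w : ℂ).re) := by rw [hw, inner_add_right]; rw [Complex.add_re]; ring
        _ = 0 := by rw [this]; ring
    rw [hzero] at hEt
    exact hEt
  have hconst := is_const_of_deriv_eq_zero (f := E)
    (fun t => (key t).differentiableAt) (fun t => (key t).deriv)
  intro t₁ t₂
  have := hconst t₁ t₂
  simpa [hE, pInner_eq_inner] using this
end

section
/- Let N ∈ ℕ, C₀ > 0, and let ψ : ℝ → ℂ^N be differentiable. Define q : ℝ → ℝ by q(t) = √(Σ_j |ψ_j(t)|⁴ + C₀). Then q is differentiable and for all t, q'(t) = (2 / q(t)) * Re⟨ψ'(t), |ψ t|²(ψ t)⟩, where |ψ|²ψ = (|ψ_j|²ψ_j)_j and ⟨x,y⟩ = Σ_j x_j·conj(y_j). In particular, if ψ additionally satisfies the nonlinear Schrödinger ODE i ψ'(t) = L (ψ t) + β • (|ψ t|²(ψ t)) for a Hermitian linear map L : ℂ^N → ℂ^N and β ∈ ℝ, then the pair (ψ, q) satisfies the SAV system ψ'(t) = −i • (L (ψ t) + (β q t / ρ(ψ t)) • (|ψ t|²(ψ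 t))) and q'(t) = (2 / ρ(ψ t)) * Re⟨ψ'(t), |ψ t|²(ψ t)⟩, where ρ(ψ) = √(Σ_j |ψ_j|⁴ + C₀). -/
open Finset Complex

lemma componentHasDerivAt {N : ℕ} (ψ : ℝ → EuclideanSpace ℂ (Fin N))
    (hψ : Differentiable ℝ ψ) (t : ℝ) (j : Fin N) :
    HasDerivAt (fun s => ψ s j) (deriv ψ t j) t := by
  have h := (hψ t).hasDerivAt
  have := ((EuclideanSpace.proj j : EuclideanSpace ℂ (Fin N) →L[ℂ] ℂ).restrictScalars
      ℝ).hasFDerivAt.comp_hasDerivAt t h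
  simp at this
  exact this

lemma re_mul_conj (x y : ℂ) : (x * (starRingEnd ℂ) y).re = x.re * y.re + x.im * y.im := by
  simp [Complex.mul_re]

lemma sumHasDerivAt {N : ℕ} (C₀ : ℝ) (ψ : ℝ → EuclideanSpace ℂ (Fin N))
    (hψ : Differentiable ℝ ψ) (t : ℝ) :
    HasDerivAt (fun s => (∑ j, ‖ψ s j‖ ^ 4) + C₀)
      (4 * ∑ j, Complex.normSq (ψ t j) * (deriv ψ t j * (starRingEnd ℂ) (ψ t j)).re) t := by
  have h : HasDerivAt (fun s => (∑ j, ‖ψ s j‖ ^ 4))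
      (∑ j, 4 * (Complex.normSq (ψ t j) * (deriv ψ t j * (starRingEnd ℂ) (ψ t j)).re)) t := by
    apply HasDerivAt.fun_sum
    intro j _
    have hc := componentHasDerivAt ψ hψ t j
    have hre : HasDerivAt (fun s => (ψ s j).re) ((deriv ψ t j).re) t := by
      exact (Complex.reCLM.hasFDerivAt.comp_hasDerivAt t hc :)
    have him : HasDerivAt (fun s => (ψ s j).im) ((deriv ψ t j).im) t := by
      exact (Complex.imCLM.hasFDerivAt.comp_hasDerivAt t hc :)
    have hn : HasDerivAt (fun s => Complex.normSq (ψ s j))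
        (2 * ((deriv ψ t j).re * (ψ t j).re + (deriv ψ t j).im * (ψ t j).im)) t := by
      have := ((hre.fun_pow 2).fun_add (him.fun_pow 2))
      have heq : (fun s => ((ψ s j).re) ^ 2 + ((ψ s j).im) ^ 2)
          = fun s => Complex.normSq (ψ s j) := by
        funext s; simp [Complex.normSq_apply]; ring
      rw [heq] at this
      refine this.congr_deriv (Eq.symm ?_)
      push_cast
      ring
    have h4 := hn.fun_pow 2
    have heq : (fun s => Complex.normSq (ψ s j) ^ 2) = fun s => ‖ψ s j‖ ^ 4 := by
      funext s
      rw [Complex.normSq_eq_norm_sq]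
      ring
    rw [heq] at h4
    refine h4.congr_deriv (Eq.symm ?_)
    rw [re_mul_conj]
    push_cast
    ring
  have := h.add_const C₀
  refine this.congr_deriv (Eq.symm ?_)
  rw [Finset.mul_sum]

lemma re_pInner_nlVec {N : ℕ} (x y : EuclideanSpace ℂ (Fin N)) :
    (pInner x (nlVec y)).re = ∑ j, Complex.normSq (y j) * (x j * (starRingEnd ℂ) (y j)).re := by
  rw [pInner, Complex.re_sum]
  apply Finset.sum_congr rfl
  intro j _
  rw [nlVec]
  have : (starRingEnd ℂ) ((‖y j‖ : ℂ) ^ 2 * y j) = (‖y j‖ : ℂ) ^ 2 * (starRingEnd ℂ) (y j) := by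
    simp [map_mul]
  rw [this]
  have : x j * ((‖y j‖ : ℂ) ^ 2 * (starRingEnd ℂ) (y j))
      = ((‖y j‖ ^ 2 : ℝ) : ℂ) * (x j * (starRingEnd ℂ) (y j)) := by
    push_cast; ring
  rw [this, Complex.re_ofReal_mul]
  congr 1
  rw [Complex.normSq_eq_norm_sq]

lemma qHasDerivAt {N : ℕ} (C₀ : ℝ) (hC₀ : 0 < C₀) (ψ : ℝ → EuclideanSpace ℂ (Fin N))
    (hψ : Differentiable ℝ ψ) (q : ℝ → ℝ)
    (hqdef : ∀ t, q t = Real.sqrt ((∑ j, ‖ψ t j‖ ^ 4) + C₀)) (t : ℝ) :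
    HasDerivAt q ((2 / q t) * (pInner (deriv ψ t) (nlVec (ψ t))).re) t := by
  have hqfun : q = fun s => Real.sqrt ((∑ j, ‖ψ s j‖ ^ 4) + C₀) := funext hqdef
  have hFpos : 0 < (∑ j, ‖ψ t j‖ ^ 4) + C₀ := by
    have : (0:ℝ) ≤ ∑ j, ‖ψ t j‖ ^ 4 := Finset.sum_nonneg fun j _ => by positivity
    linarith
  have hF := sumHasDerivAt C₀ ψ hψ t
  have hs := (Real.hasDerivAt_sqrt (ne_of_gt hFpos)).comp t hF
  rw [hqfun]
  refine hs.congr_deriv (Eq.symm ?_)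
  rw [re_pInner_nlVec]
  beta_reduce
  have hsq : Real.sqrt ((∑ j, ‖ψ t j‖ ^ 4) + C₀) ≠ 0 :=
    ne_of_gt (Real.sqrt_pos.mpr hFpos)
  field_simp
  ring

/-- The auxiliary variable `q(t) = √(∑ j |ψ j(t)|⁴ + C₀)` is differentiable with
`q' = (2/q) Re⟨ψ', |ψ|²ψ⟩`; in particular, any solution of the nonlinear Schrödinger ODE
`i ψ' = Lψ + β |ψ|²ψ` together with this `q` solves the SAV reformulated system (7). -/
theorem SAV_equivalence {N : ℕ} (C₀ : ℝ) (hC₀ : 0 < C₀)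
    (ψ : ℝ → EuclideanSpace ℂ (Fin N)) (hψ : Differentiable ℝ ψ)
    (q : ℝ → ℝ) (hqdef : ∀ t, q t = Real.sqrt ((∑ j, ‖ψ t j‖ ^ 4) + C₀)) :
    Differentiable ℝ q ∧
    (∀ t, deriv q t = (2 / q t) * (pInner (deriv ψ t) (nlVec (ψ t))).re) ∧
    (∀ (L : EuclideanSpace ℂ (Fin N) →ₗ[ℂ] EuclideanSpace ℂ (Fin N)),
      (∀ x y, pInner (L x) y = pInner x (L y)) →
      ∀ β : ℝ,
        (∀ t, Complex.I • deriv ψ t = L (ψ t) + (β : ℂ) • nlVec (ψ t)) →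
        (∀ t, deriv ψ t = (-Complex.I) •
            (L (ψ t) + ((β * q t / savRho C₀ (ψ t) : ℝ) : ℂ) • nlVec (ψ t))) ∧
        (∀ t, deriv q t =
            (2 / savRho C₀ (ψ t)) * (pInner (deriv ψ t) (nlVec (ψ t))).re)) := by
  have hq : ∀ t, HasDerivAt q ((2 / q t) * (pInner (deriv ψ t) (nlVec (ψ t))).re) t :=
    qHasDerivAt C₀ hC₀ ψ hψ q hqdef
  have hrho : ∀ t, savRho C₀ (ψ t) = q t := fun t => (hqdef t).symm
  have hqpos : ∀ t, 0 < q t := by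
    intro t
    rw [hqdef t]
    apply Real.sqrt_pos.mpr
    have : (0:ℝ) ≤ ∑ j, ‖ψ t j‖ ^ 4 := Finset.sum_nonneg fun j _ => by positivity
    linarith
  refine ⟨fun t => ((hq t).differentiableAt), fun t => (hq t).deriv, ?_⟩
  intro L _ β hODE
  constructor
  · intro t
    have h1 : ((β * q t / savRho C₀ (ψ t) : ℝ) : ℂ) = (β : ℂ) := by
      rw [hrho t]
      rw [mul_div_assoc, div_self (ne_of_gt (hqpos t)), mul_one]
    rw [h1, ← hODE t, smul_smul]
    simp
  · intro t
    rw [hrho t]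
    exact (hq t).deriv
end

section
/- Let N ∈ ℕ, let L : ℂ^N → ℂ^N be a Hermitian (self-adjoint) linear map, β ∈ ℝ, C₀ > 0, ρ(ψ) = √(Σ_j |ψ_j|⁴ + C₀). Let ψ : ℝ → ℂ^N and q : ℝ → ℝ be differentiable, and define u : ℝ → ℂ^N by u(t) = exp(i t L) (ψ t). Then (ψ, q) satisfies the SAV system ψ'(t) = −i • (L (ψ t) + (β q t / ρ(ψ t)) • (|ψ t|²(ψ t))), q'(t) = (2 / ρ(ψ t)) * Re⟨ψ'(t), |ψ t|²(ψ t)⟩, for all t, if and only if (u, q) satisfies the Lawson-transformed system u'(t) = −i • exp(i t L) ((β q t / ρ(v t)) • (|v t|²(v t))) and q'(t) = (2 / ρ(v t)) * Re⟨−i • (L (v t)), |v t|²(v t)⟩, where v t := exp(−i t L) (u t) = ψ t. -/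
open Finset Complex

lemma pInner_smul_left {N : ℕ} (a : ℂ) (x y : EuclideanSpace ℂ (Fin N)) :
    pInner (a • x) y = a * pInner x y := by
  simp [pInner, Finset.mul_sum, mul_assoc]

lemma pInner_add_left {N : ℕ} (x y z : EuclideanSpace ℂ (Fin N)) :
    pInner (x + y) z = pInner x z + pInner y z := by
  simp [pInner, add_mul, Finset.sum_add_distrib]

lemma pInner_self_im {N : ℕ} (x : EuclideanSpace ℂ (Fin N)) : (pInner x x).im = 0 := by
  simp [pInner, Complex.im_sum, Complex.mul_conj]

lemma aux_smul_eq {N : ℕ} (L : EuclideanSpace ℂ (Fin N) →L[ℂ] EuclideanSpace ℂ (Fin N))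
    (t : ℝ) : (Complex.I * (t : ℂ)) • L = t • (Complex.I • L) := by
  rw [← algebraMap_smul ℂ t (Complex.I • L), smul_smul]
  congr 1
  simp [mul_comm]

lemma aux_exp_cancel {N : ℕ} (x : EuclideanSpace ℂ (Fin N) →L[ℂ] EuclideanSpace ℂ (Fin N))
    (y : EuclideanSpace ℂ (Fin N)) :
    NormedSpace.exp (-x) (NormedSpace.exp x y) = y := by
  have h1 : NormedSpace.exp (-x) * NormedSpace.exp x = 1 := by
    rw [← NormedSpace.exp_add_of_commute_of_mem_ball (𝕂 := ℂ) ((Commute.refl x).neg_left)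
      ((NormedSpace.expSeries_radius_eq_top ℂ (EuclideanSpace ℂ (Fin N) →L[ℂ] EuclideanSpace ℂ (Fin N))).symm ▸ edist_lt_top _ _)
      ((NormedSpace.expSeries_radius_eq_top ℂ (EuclideanSpace ℂ (Fin N) →L[ℂ] EuclideanSpace ℂ (Fin N))).symm ▸ edist_lt_top _ _)]
    simp [NormedSpace.exp_zero]
  calc NormedSpace.exp (-x) (NormedSpace.exp x y)
      = (NormedSpace.exp (-x) * NormedSpace.exp x) y := rfl
    _ = y := by rw [h1]; rfl

lemma aux_exp_inj {N : ℕ} (x : EuclideanSpace ℂ (Fin N) →L[ℂ] EuclideanSpace ℂ (Fin N))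
    (a b : EuclideanSpace ℂ (Fin N)) :
    NormedSpace.exp x a = NormedSpace.exp x b ↔ a = b := by
  constructor
  · intro h
    have := congrArg (fun z => NormedSpace.exp (-x) z) h
    simpa [aux_exp_cancel] using this
  · intro h; rw [h]

lemma aux_deriv_u {N : ℕ} (A : EuclideanSpace ℂ (Fin N) →L[ℂ] EuclideanSpace ℂ (Fin N))
    (ψ : ℝ → EuclideanSpace ℂ (Fin N)) (hψ : Differentiable ℝ ψ)
    (u : ℝ → EuclideanSpace ℂ (Fin N))
    (hu : ∀ s, u s = NormedSpace.exp (s • A) (ψ s)) (t : ℝ) :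
    deriv u t = NormedSpace.exp (t • A) (A (ψ t) + deriv ψ t) := by
  have hc0 : HasDerivAt (fun s : ℝ => NormedSpace.exp (s • A))
      (NormedSpace.exp (t • A) * A) t := by
    have h := hasDerivAt_exp_smul_const (𝕂 := ℝ) A t
    simpa using h
  have hc : HasDerivAt
      (fun s : ℝ => (NormedSpace.exp (s • A)).restrictScalars ℝ)
      ((NormedSpace.exp (t • A) * A).restrictScalars ℝ) t :=
    (ContinuousLinearMap.restrictScalarsL ℂ (EuclideanSpace ℂ (Fin N))
      (EuclideanSpace ℂ (Fin N)) ℝ ℝ).hasFDerivAt.comp_hasDerivAt t hc0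
  have hcomp := hc.clm_apply (hψ t).hasDerivAt
  have huf : u = fun s : ℝ =>
      ((NormedSpace.exp (s • A)).restrictScalars ℝ) (ψ s) := by
    funext s
    rw [hu s]
    rfl
  rw [huf, hcomp.deriv]
  show (NormedSpace.exp (t • A) * A) (ψ t) + NormedSpace.exp (t • A) (deriv ψ t) = _
  rw [ContinuousLinearMap.mul_apply, ← map_add]

/-- Lawson change of variables `u(t) = exp(i t L) ψ(t)`: `(ψ, q)` solves the SAV
system (7) if and only if `(u, q)` solves the Lawson-transformed system (9). -/
theorem Lawson_transform_equivalence {N : ℕ}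
    (L : EuclideanSpace ℂ (Fin N) →L[ℂ] EuclideanSpace ℂ (Fin N))
    (hL : ∀ x y, pInner (L x) y = pInner x (L y))
    (β : ℝ) (C₀ : ℝ) (hC₀ : 0 < C₀)
    (ψ : ℝ → EuclideanSpace ℂ (Fin N)) (q : ℝ → ℝ)
    (hψ : Differentiable ℝ ψ) (hq : Differentiable ℝ q)
    (u v : ℝ → EuclideanSpace ℂ (Fin N))
    (hu : ∀ t, u t = NormedSpace.exp ((Complex.I * (t : ℂ)) • L) (ψ t))
    (hv : ∀ t, v t = NormedSpace.exp (((-Complex.I) * (t : ℂ)) • L) (u t)) :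
    ((∀ t, deriv ψ t = (-Complex.I) •
          (L (ψ t) + ((β * q t / savRho C₀ (ψ t) : ℝ) : ℂ) • nlVec (ψ t))) ∧
      (∀ t, deriv q t =
          (2 / savRho C₀ (ψ t)) * (pInner (deriv ψ t) (nlVec (ψ t))).re))
    ↔
    ((∀ t, deriv u t = (-Complex.I) •
          NormedSpace.exp ((Complex.I * (t : ℂ)) • L)
            (((β * q t / savRho C₀ (v t) : ℝ) : ℂ) • nlVec (v t))) ∧
      (∀ t, deriv q t =
          (2 / savRho C₀ (v t)) *
            (pInner ((-Complex.I) • L (v t)) (nlVec (v t))).re)) := by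
  have hsm : ∀ t : ℝ, (Complex.I * (t : ℂ)) • L = t • (Complex.I • L) :=
    aux_smul_eq L
  have hsm' : ∀ t : ℝ, ((-Complex.I) * (t : ℂ)) • L = -(t • (Complex.I • L)) := by
    intro t
    rw [← hsm t]
    module
  have hveq : ∀ t, v t = ψ t := by
    intro t
    rw [hv, hu, hsm, hsm', aux_exp_cancel]
  have hdu : ∀ t, deriv u t
      = NormedSpace.exp (t • (Complex.I • L))
          ((Complex.I • L) (ψ t) + deriv ψ t) := by
    intro t
    exact aux_deriv_u (Complex.I • L) ψ hψ u (fun s => by rw [hu s, hsm s]) t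
  have key1 : ∀ t,
      (deriv ψ t = (-Complex.I) •
          (L (ψ t) + ((β * q t / savRho C₀ (ψ t) : ℝ) : ℂ) • nlVec (ψ t)))
      ↔ (deriv u t = (-Complex.I) •
          NormedSpace.exp ((Complex.I * (t : ℂ)) • L)
            (((β * q t / savRho C₀ (ψ t) : ℝ) : ℂ) • nlVec (ψ t))) := by
    intro t
    rw [hdu t, hsm t, ← map_smul, aux_exp_inj]
    have hAψ : (Complex.I • L) (ψ t) = Complex.I • L (ψ t) :=
      ContinuousLinearMap.smul_apply _ _ _
    set w : EuclideanSpace ℂ (Fin N) :=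
      ((β * q t / savRho C₀ (ψ t) : ℝ) : ℂ) • nlVec (ψ t) with hw
    constructor
    · intro h
      rw [h, hAψ, smul_add]
      module
    · intro h
      have h2 : deriv ψ t = -((Complex.I • L) (ψ t)) + (-Complex.I) • w :=
        eq_neg_add_of_add_eq h
      rw [h2, hAψ, smul_add]
      module
  have key2 : ∀ t,
      (deriv ψ t = (-Complex.I) •
          (L (ψ t) + ((β * q t / savRho C₀ (ψ t) : ℝ) : ℂ) • nlVec (ψ t))) →
      (pInner (deriv ψ t) (nlVec (ψ t))).re
        = (pInner ((-Complex.I) • L (ψ t)) (nlVec (ψ t))).re := by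
    intro t h
    rw [h, smul_add, pInner_add_left, Complex.add_re]
    have h0 : (pInner ((-Complex.I) •
        (((β * q t / savRho C₀ (ψ t) : ℝ) : ℂ) • nlVec (ψ t))) (nlVec (ψ t))).re = 0 := by
      rw [smul_smul, pInner_smul_left]
      have hr := pInner_self_im (nlVec (ψ t))
      have hc : ((β * q t / savRho C₀ (ψ t) : ℝ) : ℂ).im = 0 := Complex.ofReal_im _
      simp only [Complex.mul_re, Complex.mul_im, Complex.neg_re, Complex.neg_im,
        Complex.I_re, Complex.I_im, hr, hc]
      ring
    rw [h0, add_zero]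
  simp only [hveq]
  constructor
  · rintro ⟨h1, h2⟩
    refine ⟨fun t => (key1 t).mp (h1 t), fun t => ?_⟩
    rw [h2 t, key2 t (h1 t)]
  · rintro ⟨h1, h2⟩
    have h1' : ∀ t, deriv ψ t = (-Complex.I) •
        (L (ψ t) + ((β * q t / savRho C₀ (ψ t) : ℝ) : ℂ) • nlVec (ψ t)) :=
      fun t => (key1 t).mpr (h1 t)
    refine ⟨h1', fun t => ?_⟩
    rw [h2 t, key2 t (h1' t)]
end

section
/- Let N ∈ ℕ, let L : ℂ^N → ℂ^N be a Hermitian (self-adjoint) linear map, β ∈ ℝ, C₀ > 0, ρ(ψ) = √(Σ_j |ψ_j|⁴ + C₀). Let u : ℝ → ℂ^N and q : ℝ → ℝ be differentiable and satisfy the Lawson-transformed SAV system: for all t, u'(t) = −i • exp(i t L) ((β q t / ρ(v t)) • (|v t|²(v t))) and q'(t) = (2 / ρ(v t)) * Re⟨−i • (L (v t)), |v t|²(v t)⟩, where v t := exp(−i t L) (u t). Then both t ↦ ⟨u t, u t⟩ and t ↦ Re⟨L (u t), u t⟩ + (β/2) (q t)² are constant in t. -/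
open Finset Complex

set_option maxHeartbeats 1600000 in
/-- Conservation laws (10) and (11) of the Lawson-transformed SAV system (9): along any
solution `(u, q)`, both the mass `⟨u, u⟩` and the modified energy
`Re⟨Lu, u⟩ + (β/2) q²` are constant in `t`. -/
theorem Lawson_system_conservation {N : ℕ}
    (L : EuclideanSpace ℂ (Fin N) →L[ℂ] EuclideanSpace ℂ (Fin N))
    (hL : ∀ x y, pInner (L x) y = pInner x (L y))
    (β : ℝ) (C₀ : ℝ) (hC₀ : 0 < C₀)
    (u : ℝ → EuclideanSpace ℂ (Fin N)) (q : ℝ → ℝ)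
    (hu : Differentiable ℝ u) (hq : Differentiable ℝ q)
    (v : ℝ → EuclideanSpace ℂ (Fin N))
    (hv : ∀ t, v t = NormedSpace.exp (((-Complex.I) * (t : ℂ)) • L) (u t))
    (hode₁ : ∀ t, deriv u t = (-Complex.I) •
        NormedSpace.exp ((Complex.I * (t : ℂ)) • L)
          (((β * q t / savRho C₀ (v t) : ℝ) : ℂ) • nlVec (v t)))
    (hode₂ : ∀ t, deriv q t =
        (2 / savRho C₀ (v t)) * (pInner ((-Complex.I) • L (v t)) (nlVec (v t))).re) :
    (∀ t₁ t₂ : ℝ, pInner (u t₁) (u t₁) = pInner (u t₂) (u t₂)) ∧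
    (∀ t₁ t₂ : ℝ,
      (pInner (L (u t₁)) (u t₁)).re + (β / 2) * (q t₁) ^ 2
        = (pInner (L (u t₂)) (u t₂)).re + (β / 2) * (q t₂) ^ 2) := by
  classical
  have hsym : ∀ x y : EuclideanSpace ℂ (Fin N),
      (inner ℂ (L x) y : ℂ) = inner ℂ x (L y) := by
    intro x y
    have h := hL y x
    rw [pInner_eq_inner, pInner_eq_inner] at h
    exact h.symm
  have hadj : L = ContinuousLinearMap.adjoint L :=
    (ContinuousLinearMap.eq_adjoint_iff L L).2 hsym
  have hstarL : star L = L := by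
    rw [ContinuousLinearMap.star_eq_adjoint, ← hadj]
  have hcomm0 : ∀ a b : ℂ, Commute (a • L) (b • L) :=
    fun a b => ((Commute.refl L).smul_left a).smul_right b
  have hUmUp : ∀ t : ℝ,
      NormedSpace.exp (((-Complex.I) * (t : ℂ)) • L)
        * NormedSpace.exp ((Complex.I * (t : ℂ)) • L) = 1 := by
    intro t
    have h0 : ((-Complex.I) * (t : ℂ)) • L + (Complex.I * (t : ℂ)) • L = (0 : _) := by
      module
    let +nondep : NormedAlgebra ℚ (EuclideanSpace ℂ (Fin N) →L[ℂ] EuclideanSpace ℂ (Fin N)) :=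
      .restrictScalars ℚ ℂ _
    rw [← NormedSpace.exp_add_of_commute (hcomm0 _ _), h0, NormedSpace.exp_zero]
  have hUpUm : ∀ t : ℝ,
      NormedSpace.exp ((Complex.I * (t : ℂ)) • L)
        * NormedSpace.exp (((-Complex.I) * (t : ℂ)) • L) = 1 := by
    intro t
    have h0 : (Complex.I * (t : ℂ)) • L + ((-Complex.I) * (t : ℂ)) • L = (0 : _) := by
      module
    let +nondep : NormedAlgebra ℚ (EuclideanSpace ℂ (Fin N) →L[ℂ] EuclideanSpace ℂ (Fin N)) :=
      .restrictScalars ℚ ℂ _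
    rw [← NormedSpace.exp_add_of_commute (hcomm0 _ _), h0, NormedSpace.exp_zero]
  have hstarUp : ∀ t : ℝ,
      star (NormedSpace.exp ((Complex.I * (t : ℂ)) • L))
        = NormedSpace.exp (((-Complex.I) * (t : ℂ)) • L) := by
    intro t
    rw [NormedSpace.star_exp]
    congr 1
    rw [star_smul, hstarL]
    congr 1
    simp [Complex.star_def, Complex.conj_ofReal]
  have hunit : ∀ (t : ℝ) (x y : EuclideanSpace ℂ (Fin N)),
      (inner ℂ (NormedSpace.exp ((Complex.I * (t : ℂ)) • L) x)
        (NormedSpace.exp ((Complex.I * (t : ℂ)) • L) y) : ℂ) = inner ℂ x y := by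
    intro t x y
    rw [← ContinuousLinearMap.adjoint_inner_right
        (NormedSpace.exp ((Complex.I * (t : ℂ)) • L)) x
        (NormedSpace.exp ((Complex.I * (t : ℂ)) • L) y),
      ← ContinuousLinearMap.star_eq_adjoint, hstarUp, ← ContinuousLinearMap.mul_apply,
      hUmUp, ContinuousLinearMap.one_apply]
  have hLUp : ∀ (t : ℝ) (x : EuclideanSpace ℂ (Fin N)),
      L (NormedSpace.exp ((Complex.I * (t : ℂ)) • L) x)
        = NormedSpace.exp ((Complex.I * (t : ℂ)) • L) (L x) := by
    intro t x
    have h : Commute L (NormedSpace.exp ((Complex.I * (t : ℂ)) • L)) :=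
      ((Commute.refl L).smul_right _).exp_right
    calc L (NormedSpace.exp ((Complex.I * (t : ℂ)) • L) x)
        = (L * NormedSpace.exp ((Complex.I * (t : ℂ)) • L)) x := rfl
      _ = (NormedSpace.exp ((Complex.I * (t : ℂ)) • L) * L) x := by rw [h]
      _ = NormedSpace.exp ((Complex.I * (t : ℂ)) • L) (L x) := rfl
  have huv : ∀ t : ℝ, u t = NormedSpace.exp ((Complex.I * (t : ℂ)) • L) (v t) := by
    intro t
    rw [hv t]
    have h := congrFun (congrArg DFunLike.coe (hUpUm t)) (u t)
    rw [ContinuousLinearMap.mul_apply, ContinuousLinearMap.one_apply] at h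
    exact h.symm
  -- mass conservation
  have hmass : ∀ t : ℝ, HasDerivAt (fun t => (inner ℂ (u t) (u t) : ℂ)) 0 t := by
    intro t
    have hu' : HasDerivAt u (deriv u t) t := (hu t).hasDerivAt
    have h := HasDerivAt.inner ℂ hu' hu'
    convert h using 1
    · rfl
    have hW : (inner ℂ (deriv u t) (u t) : ℂ)
        = Complex.I * ((β * q t / savRho C₀ (v t) : ℝ) : ℂ)
            * inner ℂ (nlVec (v t)) (v t) := by
      rw [hode₁ t, huv t, inner_smul_left, map_smul, inner_smul_left, hunit]
      simp [Complex.conj_I, Complex.conj_ofReal]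
      ring
    have hR : (starRingEnd ℂ) (inner ℂ (nlVec (v t)) (v t) : ℂ)
        = inner ℂ (nlVec (v t)) (v t) := by
      rw [inner_conj_symm (v t) (nlVec (v t))]
      simp only [PiLp.inner_apply, RCLike.inner_apply, nlVec, map_mul, map_pow,
        Complex.star_def, Complex.conj_ofReal]
      refine Finset.sum_congr rfl fun j _ => ?_
      ring
    have hconj : (inner ℂ (u t) (deriv u t) : ℂ)
        = (starRingEnd ℂ) (inner ℂ (deriv u t) (u t) : ℂ) :=
      (inner_conj_symm (u t) (deriv u t)).symm
    rw [hconj, hW, map_mul, map_mul, hR, Complex.conj_I, Complex.conj_ofReal]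
    ring
  have hmassc : ∀ t₁ t₂ : ℝ, (inner ℂ (u t₁) (u t₁) : ℂ) = inner ℂ (u t₂) (u t₂) :=
    fun t₁ t₂ => is_const_of_deriv_eq_zero
      (fun t => (hmass t).differentiableAt) (fun t => (hmass t).deriv) t₁ t₂
  -- energy conservation
  have henergy : ∀ t : ℝ, HasDerivAt
      (fun t => (inner ℂ (L (u t)) (u t) : ℂ).re + (β / 2) * q t ^ 2) 0 t := by
    intro t
    have hu' : HasDerivAt u (deriv u t) t := (hu t).hasDerivAt
    have hLu : HasDerivAt (fun t => L (u t)) (L (deriv u t)) t := by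
      simpa only [Function.comp_def, ContinuousLinearMap.coe_restrictScalars'] using
        ((L.restrictScalars ℝ).hasFDerivAt (x := u t)).comp_hasDerivAt t hu'
    have hG : HasDerivAt (fun t => (inner ℂ (L (u t)) (u t) : ℂ))
        ((inner ℂ (L (u t)) (deriv u t) : ℂ) + inner ℂ (L (deriv u t)) (u t)) t :=
      HasDerivAt.inner ℂ hLu hu'
    have hGre : HasDerivAt (fun t => (inner ℂ (L (u t)) (u t) : ℂ).re)
        (((inner ℂ (L (u t)) (deriv u t) : ℂ) + inner ℂ (L (deriv u t)) (u t)).re) t := by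
      simpa only [Function.comp_def, Complex.reCLM_apply] using
        Complex.reCLM.hasFDerivAt.comp_hasDerivAt t hG
    have hq2 : HasDerivAt (fun t => (β / 2) * q t ^ 2) (β * q t * deriv q t) t := by
      have h := ((hq t).hasDerivAt).pow 2
      have h2 := h.const_mul (β / 2)
      refine h2.congr_deriv ?_
      push_cast
      ring
    have htot := hGre.add hq2
    refine htot.congr_deriv ?_
    have hz : (inner ℂ (L (u t)) (deriv u t) : ℂ)
        = (-Complex.I) * ((β * q t / savRho C₀ (v t) : ℝ) : ℂ)
            * inner ℂ (L (v t)) (nlVec (v t)) := by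
      rw [hode₁ t, huv t, hLUp, inner_smul_right, map_smul, inner_smul_right, hunit]
      ring
    have hz2 : (inner ℂ (L (deriv u t)) (u t) : ℂ)
        = (starRingEnd ℂ) (inner ℂ (L (u t)) (deriv u t) : ℂ) := by
      rw [hsym (deriv u t) (u t), inner_conj_symm (deriv u t) (L (u t))]
    rw [hz2, hz, hode₂ t, pInner_eq_inner, inner_smul_right]
    have hw : (inner ℂ (nlVec (v t)) (L (v t)) : ℂ)
        = (starRingEnd ℂ) (inner ℂ (L (v t)) (nlVec (v t)) : ℂ) :=
      (inner_conj_symm (nlVec (v t)) (L (v t))).symm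
    rw [hw]
    set w : ℂ := inner ℂ (L (v t)) (nlVec (v t)) with hwdef
    set r : ℝ := savRho C₀ (v t) with hrdef
    simp only [map_mul, Complex.conj_I, Complex.conj_ofReal, Complex.add_re,
      Complex.mul_re, Complex.mul_im, Complex.neg_re, Complex.neg_im,
      Complex.I_re, Complex.I_im, Complex.ofReal_re, Complex.ofReal_im,
      Complex.conj_re, Complex.conj_im]
    ring
  have henc : ∀ t₁ t₂ : ℝ,
      (inner ℂ (L (u t₁)) (u t₁) : ℂ).re + (β / 2) * q t₁ ^ 2
        = (inner ℂ (L (u t₂)) (u t₂) : ℂ).re + (β / 2) * q t₂ ^ 2 :=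
    fun t₁ t₂ => is_const_of_deriv_eq_zero
      (fun t => (henergy t).differentiableAt) (fun t => (henergy t).deriv) t₁ t₂
  constructor
  · intro t₁ t₂
    rw [pInner_eq_inner, pInner_eq_inner]
    exact hmassc t₁ t₂
  · intro t₁ t₂
    have hre : ∀ t : ℝ, (pInner (L (u t)) (u t)).re = (inner ℂ (L (u t)) (u t) : ℂ).re := by
      intro t
      rw [pInner_eq_inner]
      conv_lhs => rw [← inner_conj_symm (u t) (L (u t))]
      exact Complex.conj_re _
    rw [hre t₁, hre t₂]
    exact henc t₁ t₂
end

section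
/- Let N ∈ ℕ, let L : ℂ^N → ℂ^N be a Hermitian linear map, β ∈ ℝ, C₀ > 0, ρ(ψ) = √(Σ_j |ψ_j|⁴ + C₀), τ > 0, n ∈ ℕ, tₙ = n τ. Let a : Fin s → Fin s → ℝ, b : Fin s → ℝ be Runge–Kutta coefficients and c i = Σ_j a i j. Suppose uⁿ ∈ ℂ^N, qⁿ ∈ ℝ, and stages U : Fin s → ℂ^N, Q : Fin s → ℝ satisfy the Runge–Kutta scheme for the Lawson-transformed system: U i = uⁿ + τ Σ_j a i j • k̃ j, Q i = qⁿ + τ Σ_j a i j * l j, with k̃ i = −i • exp(i (tₙ + c i τ) L) ((β Q i / ρ(V i)) • (|V i|²(V i))), l i = (2 / ρ(V i)) * Re⟨−i • (L (V i)), |V i|²(V i)⟩, where V i := exp(−i (tₙ + c i τ) L) (U i), and uⁿ⁺¹ = uⁿ + τ Σ_i b i • k̃ i, qⁿ⁺¹ = qⁿ + τ Σ_i b i * l i. Define ψⁿ = exp(−i tₙ L) uⁿ, Ψ i = exp(−i (tₙ + c i τ) L) (U i), and k i = exp(−i (tₙ + c i τ) L) (k̃ i). Then the variables (ψⁿ,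 Ψ, Q, k, l) satisfy the ESAV-RK scheme: Ψ i = exp(−i c i τ L) ψⁿ + τ Σ_j a i j • (exp(i (c j − c i) τ L) (k j)), Q i = qⁿ + τ Σ_j a i j * l j, k i = −i (β Q i / ρ(Ψ i)) • (|Ψ i|²(Ψ i)), l i = (2 / ρ(Ψ i)) * Re⟨−i (L (Ψ i)), |Ψ i|²(Ψ i)⟩, and moreover exp(−i tₙ₊₁ L) uⁿ⁺¹ = exp(−i τ L) ψⁿ + τ Σ_i b i • (exp(−i (1 − c i) τ L) (k i)), where tₙ₊₁ = tₙ + τ. -/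
open Finset Complex

lemma exp_smul_comp_apply {N : ℕ}
    (L : EuclideanSpace ℂ (Fin N) →L[ℂ] EuclideanSpace ℂ (Fin N)) (z w : ℂ)
    (x : EuclideanSpace ℂ (Fin N)) :
    NormedSpace.exp (z • L) (NormedSpace.exp (w • L) x)
      = NormedSpace.exp ((z + w) • L) x := by
  have hcomm : Commute (z • L) (w • L) :=
    ((Commute.refl L).smul_left z).smul_right w
  have h2 : (z + w) • L = z • L + w • L := add_smul z w L
  rw [h2, NormedSpace.exp_add_of_commute_of_mem_ball (𝕂 := ℂ) hcomm
    ((NormedSpace.expSeries_radius_eq_top ℂ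
      (EuclideanSpace ℂ (Fin N) →L[ℂ] EuclideanSpace ℂ (Fin N))).symm ▸ edist_lt_top _ _)
    ((NormedSpace.expSeries_radius_eq_top ℂ
      (EuclideanSpace ℂ (Fin N) →L[ℂ] EuclideanSpace ℂ (Fin N))).symm ▸ edist_lt_top _ _)]
  rfl

/-- Section 3 of the paper: after manipulating the exponentials
(`ψⁿ = exp(−i tₙ L) uⁿ`, `Ψᵢ = exp(−i (tₙ + cᵢτ) L) Uᵢ`, `kᵢ = exp(−i (tₙ + cᵢτ) L) k̃ᵢ`),
the Runge–Kutta discretization (13) of the Lawson-transformed system can be rewritten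
as the exponential SAV Runge–Kutta scheme (14)–(15) in the original variable. -/
theorem RK_Lawson_to_ESAV_RK {N : ℕ}
    (L : EuclideanSpace ℂ (Fin N) →L[ℂ] EuclideanSpace ℂ (Fin N))
    (hL : ∀ x y, pInner (L x) y = pInner x (L y))
    (β : ℝ) (C₀ : ℝ) (hC₀ : 0 < C₀) (τ : ℝ) (hτ : 0 < τ) (n : ℕ)
    (tn : ℝ) (htn : tn = n * τ)
    (s : ℕ) (a : Fin s → Fin s → ℝ) (b : Fin s → ℝ)
    (c : Fin s → ℝ) (hc : ∀ i, c i = ∑ j, a i j)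
    (un : EuclideanSpace ℂ (Fin N)) (qn : ℝ)
    (U : Fin s → EuclideanSpace ℂ (Fin N)) (Q : Fin s → ℝ)
    (V : Fin s → EuclideanSpace ℂ (Fin N))
    (hV : ∀ i, V i = NormedSpace.exp
        (((-Complex.I) * ((tn + c i * τ : ℝ) : ℂ)) • L) (U i))
    (ktilde : Fin s → EuclideanSpace ℂ (Fin N)) (l : Fin s → ℝ)
    (hktilde : ∀ i, ktilde i = (-Complex.I) •
        NormedSpace.exp ((Complex.I * ((tn + c i * τ : ℝ) : ℂ)) • L)
          (((β * Q i / savRho C₀ (V i) : ℝ) : ℂ) • nlVec (V i)))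
    (hl : ∀ i, l i = (2 / savRho C₀ (V i)) *
        (pInner ((-Complex.I) • L (V i)) (nlVec (V i))).re)
    (hU : ∀ i, U i = un + τ • ∑ j, a i j • ktilde j)
    (hQ : ∀ i, Q i = qn + τ * ∑ j, a i j * l j)
    (un1 : EuclideanSpace ℂ (Fin N)) (qn1 : ℝ)
    (hun1 : un1 = un + τ • ∑ i, b i • ktilde i)
    (hqn1 : qn1 = qn + τ * ∑ i, b i * l i)
    (ψn : EuclideanSpace ℂ (Fin N))
    (hψn : ψn = NormedSpace.exp (((-Complex.I) * ((tn : ℝ) : ℂ)) • L) un)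
    (Ψ : Fin s → EuclideanSpace ℂ (Fin N))
    (hΨ : ∀ i, Ψ i = NormedSpace.exp
        (((-Complex.I) * ((tn + c i * τ : ℝ) : ℂ)) • L) (U i))
    (k : Fin s → EuclideanSpace ℂ (Fin N))
    (hk : ∀ i, k i = NormedSpace.exp
        (((-Complex.I) * ((tn + c i * τ : ℝ) : ℂ)) • L) (ktilde i)) :
    (∀ i, Ψ i = NormedSpace.exp (((-Complex.I) * ((c i * τ : ℝ) : ℂ)) • L) ψn
        + τ • ∑ j, a i j •
            NormedSpace.exp ((Complex.I * (((c j - c i) * τ : ℝ) : ℂ)) • L) (k j)) ∧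
    (∀ i, Q i = qn + τ * ∑ j, a i j * l j) ∧
    (∀ i, k i = (-Complex.I * ((β * Q i / savRho C₀ (Ψ i) : ℝ) : ℂ)) • nlVec (Ψ i)) ∧
    (∀ i, l i = (2 / savRho C₀ (Ψ i)) *
        (pInner ((-Complex.I) • L (Ψ i)) (nlVec (Ψ i))).re) ∧
    NormedSpace.exp (((-Complex.I) * ((tn + τ : ℝ) : ℂ)) • L) un1
      = NormedSpace.exp (((-Complex.I) * ((τ : ℝ) : ℂ)) • L) ψn
        + τ • ∑ i, b i •
            NormedSpace.exp (((-Complex.I) * (((1 - c i) * τ : ℝ) : ℂ)) • L) (k i) := by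
  have hVΨ : ∀ i, V i = Ψ i := fun i => by rw [hV, hΨ]
  have key : ∀ (z w : ℂ) (x : EuclideanSpace ℂ (Fin N)), z + w = 0 →
      NormedSpace.exp (z • L) (NormedSpace.exp (w • L) x) = x := by
    intro z w x h
    have h0 : (0 : ℂ) • L = 0 := zero_smul ℂ L
    rw [exp_smul_comp_apply, h, h0, NormedSpace.exp_zero,
      ContinuousLinearMap.one_apply]
  refine ⟨?_, hQ, ?_, ?_, ?_⟩
  · intro i
    rw [hΨ i, hU i, map_add, ContinuousLinearMap.map_smul_of_tower, map_sum]
    congr 1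
    · rw [hψn, exp_smul_comp_apply]
      congr 2
      push_cast
      ring
    · refine congrArg _ (Finset.sum_congr rfl fun j _ => ?_)
      rw [ContinuousLinearMap.map_smul_of_tower, hk j, exp_smul_comp_apply]
      congr 3
      push_cast
      ring
  · intro i
    rw [hk i, hktilde i, map_smul, key _ _ _ (by push_cast; ring), hVΨ i, mul_smul]
  · intro i
    rw [hl i, hVΨ i]
  · rw [hun1, map_add, ContinuousLinearMap.map_smul_of_tower, map_sum]
    congr 1
    · rw [hψn, exp_smul_comp_apply]
      congr 2
      push_cast
      ring
    · refine congrArg _ (Finset.sum_congr rfl fun i _ => ?_)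
      rw [ContinuousLinearMap.map_smul_of_tower, hk i, exp_smul_comp_apply]
      congr 3
      push_cast
      ring
end
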